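/- Let f, c ∈ ℝ^n and h ∈ ℝ_{≥0}^n be cost vectors. Then the optimal value of the deterministic equivalent program min{ f·x + c·y + (1/m) Σ_{j∈Ω} Σ_{t∈N} h_t s_{jt} : (x, y, z) ∈ P, s ∈ ℝ_{≥0}^{m×n}, s_{jt} ≥ Σ_{i=1}^{t} y_i − D_{jt} for all j ∈ Ω and t ∈ N } equals the optimal value of the new formulation min{ f·x + c·y + (1/m) Σ_{i∈N} h_i Θ′_i : (x, y, z) ∈ P, Θ′ ∈ ℝ_{≥0}^n, Θ′_i ≥ (m − q)·Σ_{p=1}^{i} y_p − Σ_{p=1}^{m−q} D_{σ̄_{i(p)}} for all i ∈ N and q ∈ {0,1,…,k} }. -/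

import Mathlib

noncomputable section

/-- Cumulative demand of scenario `j` through periods `1,…,t`. -/
def cumD (d : ℕ → ℕ → ℝ) (j t : ℕ) : ℝ := ∑ i ∈ Finset.Icc 1 t, d j i

/-- Big-M constant `M_i = max_{j ∈ Ω} Σ_{p=i}^n d_{j p}`. -/
def bigM (d : ℕ → ℕ → ℝ) (n m i : ℕ) : ℝ :=
  sSup ((fun j => ∑ p ∈ Finset.Icc i n, d j p) '' Set.Icc 1 m)

/-- Membership in the feasible set `P` of the static probabilistic lot-sizing problem. -/
def memP (d : ℕ → ℕ → ℝ) (n m k : ℕ) (x y z : ℕ → ℝ) : Prop :=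
  (∀ i ∈ Finset.Icc 1 n, x i = 0 ∨ x i = 1) ∧
  (∀ i ∈ Finset.Icc 1 n, 0 ≤ y i) ∧
  (∀ j ∈ Finset.Icc 1 m, z j = 0 ∨ z j = 1) ∧
  (∀ t ∈ Finset.Icc 1 n, ∀ j ∈ Finset.Icc 1 m,
    cumD d j t * (1 - z j) ≤ ∑ i ∈ Finset.Icc 1 t, y i) ∧
  (∑ j ∈ Finset.Icc 1 m, z j ≤ (k : ℝ)) ∧
  (∀ i ∈ Finset.Icc 1 n, y i ≤ bigM d n m i * x i)

lemma bigM_spec (d : ℕ → ℕ → ℝ) (n m i : ℕ) (j : ℕ) (hj : j ∈ Finset.Icc 1 m) :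
    ∑ p ∈ Finset.Icc i n, d j p ≤ bigM d n m i := by
  apply le_csSup ((Set.finite_Icc 1 m |>.image _).bddAbove)
  exact ⟨j, by simpa using hj, rfl⟩

lemma dc_eq_Icc (S : Finset ℕ) (h1 : ∀ p ∈ S, 1 ≤ p)
    (hdc : ∀ p ∈ S, ∀ q, 1 ≤ q → q ≤ p → q ∈ S) : S = Finset.Icc 1 S.card := by
  rcases S.eq_empty_or_nonempty with rfl | hS
  · simp
  · have h2 : S = Finset.Icc 1 (S.max' hS) := by
      apply le_antisymm
      · exact fun p hp => Finset.mem_Icc.mpr ⟨h1 p hp, S.le_max' p hp⟩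
      · intro q hq
        rw [Finset.mem_Icc] at hq
        exact hdc _ (S.max'_mem hS) q hq.1 hq.2
    rw [h2]
    simp [Nat.card_Icc]

lemma sum_sigma_Icc {M : Type*} [AddCommMonoid M] {m : ℕ} {σ : ℕ → ℕ}
    (hσ : Set.BijOn σ (Set.Icc 1 m) (Set.Icc 1 m)) (F : ℕ → M) :
    ∑ p ∈ Finset.Icc 1 m, F (σ p) = ∑ j ∈ Finset.Icc 1 m, F j := by
  have himg : (Finset.Icc 1 m).image σ = Finset.Icc 1 m :=
    Finset.coe_injective (by rw [Finset.coe_image, Finset.coe_Icc, hσ.image_eq])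
  conv_rhs => rw [← himg]
  rw [Finset.sum_image (fun a ha b hb hab => hσ.injOn (by simpa using ha) (by simpa using hb) hab)]

lemma card_filter_sigma {m : ℕ} {σ : ℕ → ℕ}
    (hσ : Set.BijOn σ (Set.Icc 1 m) (Set.Icc 1 m)) (P : ℕ → Prop) [DecidablePred P] :
    ((Finset.Icc 1 m).filter fun p => P (σ p)).card = ((Finset.Icc 1 m).filter P).card := by
  rw [Finset.card_filter, Finset.card_filter]
  exact sum_sigma_Icc hσ (fun j => if P j then 1 else 0)

lemma core (m k : ℕ) (hk : k < m) (Dj : ℕ → ℝ) (σ : ℕ → ℕ)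
    (hσ : Set.BijOn σ (Set.Icc 1 m) (Set.Icc 1 m))
    (hord : ∀ p q, 1 ≤ p → p ≤ q → q ≤ m → Dj (σ p) ≤ Dj (σ q))
    (z : ℕ → ℝ) (hz01 : ∀ j ∈ Finset.Icc 1 m, z j = 0 ∨ z j = 1)
    (hzsum : ∑ j ∈ Finset.Icc 1 m, z j ≤ (k : ℝ))
    (Y : ℝ) (hzD : ∀ j ∈ Finset.Icc 1 m, Dj j * (1 - z j) ≤ Y)
    (Θ : ℝ)
    (hΘ : ∀ q ≤ k, ((m : ℝ) - (q : ℝ)) * Y - ∑ p ∈ Finset.Icc 1 (m - q), Dj (σ p) ≤ Θ) :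
    ∑ j ∈ Finset.Icc 1 m, max 0 (Y - Dj j) ≤ Θ := by
  classical
  set S := (Finset.Icc 1 m).filter (fun p => Dj (σ p) ≤ Y) with hSdef
  set r := S.card with hr
  have hSsub : S ⊆ Finset.Icc 1 m := Finset.filter_subset _ _
  have hS_eq : S = Finset.Icc 1 r := by
    apply dc_eq_Icc
    · intro p hp; exact (Finset.mem_Icc.mp (hSsub hp)).1
    · intro p hp q hq1 hqp
      have hp' := Finset.mem_filter.mp hp
      have hpm := (Finset.mem_Icc.mp hp'.1).2
      exact Finset.mem_filter.mpr ⟨Finset.mem_Icc.mpr ⟨hq1, le_trans hqp hpm⟩,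
        le_trans (hord q p hq1 hqp hpm) hp'.2⟩
  have hrm : r ≤ m := by
    have := Finset.card_le_card hSsub
    simpa [Nat.card_Icc] using this
  -- complement count ≤ k
  have hTc : ((Finset.Icc 1 m).filter (fun j => ¬ Dj j ≤ Y)).card ≤ k := by
    set Tc := (Finset.Icc 1 m).filter (fun j => ¬ Dj j ≤ Y) with hTcdef
    have hz1 : ∀ j ∈ Tc, z j = 1 := by
      intro j hj
      have hj' := Finset.mem_filter.mp hj
      rcases hz01 j hj'.1 with h0 | h1
      · exfalso; apply hj'.2; have := hzD j hj'.1; rw [h0] at this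
        rw [mul_comm] at this; simpa using this
      · exact h1
    have h1 : ((Tc.card : ℝ)) ≤ (k : ℝ) := by
      calc ((Tc.card : ℝ)) = ∑ j ∈ Tc, z j := by
            rw [Finset.sum_congr rfl hz1]; simp
        _ ≤ ∑ j ∈ Finset.Icc 1 m, z j := by
            apply Finset.sum_le_sum_of_subset_of_nonneg (Finset.filter_subset _ _)
            intro j hj _
            rcases hz01 j hj with h0 | h0 <;> simp [h0]
        _ ≤ (k : ℝ) := hzsum
    exact_mod_cast h1
  have hcards : r + ((Finset.Icc 1 m).filter (fun j => ¬ Dj j ≤ Y)).card = m := by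
    have h1 : r = ((Finset.Icc 1 m).filter (fun j => Dj j ≤ Y)).card :=
      card_filter_sigma hσ (fun j => Dj j ≤ Y)
    rw [h1]
    have := Finset.card_filter_add_card_filter_not (s := Finset.Icc 1 m)
      (p := fun j => Dj j ≤ Y)
    simpa [Nat.card_Icc] using this
  have hmkr : m - k ≤ r := by omega
  have key := hΘ (m - r) (by omega)
  have h1 : m - (m - r) = r := by omega
  rw [h1] at key
  have h2 : ((m : ℝ) - ((m - r : ℕ) : ℝ)) = (r : ℝ) := by
    rw [Nat.cast_sub hrm]; ring
  rw [h2] at key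
  -- rewrite LHS
  have hre : ∑ j ∈ Finset.Icc 1 m, max 0 (Y - Dj j)
      = ∑ p ∈ Finset.Icc 1 m, max 0 (Y - Dj (σ p)) :=
    (sum_sigma_Icc hσ (fun j => max 0 (Y - Dj j))).symm
  have hsplit := Finset.sum_filter_add_sum_filter_not (Finset.Icc 1 m)
    (fun p => Dj (σ p) ≤ Y) (fun p => max 0 (Y - Dj (σ p)))
  have hzero : ∑ p ∈ (Finset.Icc 1 m).filter (fun p => ¬ Dj (σ p) ≤ Y),
      max 0 (Y - Dj (σ p)) = 0 := by
    apply Finset.sum_eq_zero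
    intro p hp
    have := (Finset.mem_filter.mp hp).2
    have : Y - Dj (σ p) ≤ 0 := by push_neg at this; linarith
    exact max_eq_left this
  have hpos : ∑ p ∈ S, max 0 (Y - Dj (σ p)) = ∑ p ∈ Finset.Icc 1 r, (Y - Dj (σ p)) := by
    rw [hS_eq]
    apply Finset.sum_congr rfl
    intro p hp
    have hp' : Dj (σ p) ≤ Y := by
      have : p ∈ S := by rw [hS_eq]; exact hp
      exact (Finset.mem_filter.mp this).2
    exact max_eq_right (by linarith)
  have hval : ∑ p ∈ Finset.Icc 1 r, (Y - Dj (σ p))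
      = (r : ℝ) * Y - ∑ p ∈ Finset.Icc 1 r, Dj (σ p) := by
    rw [Finset.sum_sub_distrib, Finset.sum_const, Nat.card_Icc]
    simp [nsmul_eq_mul]
  rw [hre, ← hsplit]
  rw [← hSdef] at *
  rw [hzero, add_zero, hpos, hval]
  exact key


lemma value_lb (n m k : ℕ) (d : ℕ → ℕ → ℝ) (f c : ℕ → ℝ)
    (x y z : ℕ → ℝ) (hP : memP d n m k x y z) (T : ℝ) (hT : 0 ≤ T) :
    ∑ i ∈ Finset.Icc 1 n, (-(|f i|) - |c i| * max (bigM d n m i) 0)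
      ≤ ∑ i ∈ Finset.Icc 1 n, f i * x i + ∑ i ∈ Finset.Icc 1 n, c i * y i
        + (1 / (m : ℝ)) * T := by
  obtain ⟨hx, hy, -, -, -, hyM⟩ := hP
  have h3 : 0 ≤ (1 / (m : ℝ)) * T := by
    apply mul_nonneg _ hT
    positivity
  have h12 : ∑ i ∈ Finset.Icc 1 n, (-(|f i|) - |c i| * max (bigM d n m i) 0)
      ≤ ∑ i ∈ Finset.Icc 1 n, (f i * x i + c i * y i) := by
    apply Finset.sum_le_sum
    intro i hi
    have hyle : y i ≤ max (bigM d n m i) 0 := by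
      rcases hx i hi with h0 | h1
      · have := hyM i hi; rw [h0, mul_zero] at this; exact le_trans this (le_max_right _ _)
      · have := hyM i hi; rw [h1, mul_one] at this; exact le_trans this (le_max_left _ _)
    have hy0 := hy i hi
    have hfx : -(|f i|) ≤ f i * x i := by
      rcases hx i hi with h0 | h1
      · rw [h0, mul_zero]; simp
      · rw [h1, mul_one]; exact neg_abs_le _
    have hcy : -(|c i| * max (bigM d n m i) 0) ≤ c i * y i := by
      nlinarith [abs_nonneg (c i), neg_abs_le (c i), le_abs_self (c i)]
    linarith
  rw [Finset.sum_add_distrib] at h12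
  linarith

lemma agg (m k q : ℕ) (hk : k < m) (hq : q ≤ k) (σ : ℕ → ℕ)
    (hσ : Set.BijOn σ (Set.Icc 1 m) (Set.Icc 1 m)) (Dj : ℕ → ℝ) (Y : ℝ) (sv : ℕ → ℝ)
    (hsv : ∀ j ∈ Finset.Icc 1 m, 0 ≤ sv j ∧ Y - Dj j ≤ sv j) :
    ((m : ℝ) - (q : ℝ)) * Y - ∑ p ∈ Finset.Icc 1 (m - q), Dj (σ p)
      ≤ ∑ j ∈ Finset.Icc 1 m, sv j := by
  have hmem : ∀ p ∈ Finset.Icc 1 (m - q), σ p ∈ Finset.Icc 1 m := by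
    intro p hp
    rw [Finset.mem_Icc] at hp
    have : σ p ∈ Set.Icc 1 m := hσ.mapsTo ⟨hp.1, le_trans hp.2 (Nat.sub_le _ _)⟩
    exact Finset.mem_Icc.mpr this
  calc ((m : ℝ) - (q : ℝ)) * Y - ∑ p ∈ Finset.Icc 1 (m - q), Dj (σ p)
      = ∑ p ∈ Finset.Icc 1 (m - q), (Y - Dj (σ p)) := by
        rw [Finset.sum_sub_distrib, Finset.sum_const, Nat.card_Icc]
        have : ((m - q + 1 - 1 : ℕ) : ℝ) = (m : ℝ) - (q : ℝ) := by
          have hqm : q ≤ m := le_of_lt (lt_of_le_of_lt hq hk)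
          have : m - q + 1 - 1 = m - q := by omega
          rw [this, Nat.cast_sub hqm]
        rw [nsmul_eq_mul, this]
    _ ≤ ∑ p ∈ Finset.Icc 1 (m - q), sv (σ p) :=
        Finset.sum_le_sum (fun p hp => (hsv (σ p) (hmem p hp)).2)
    _ = ∑ j ∈ (Finset.Icc 1 (m - q)).image σ, sv j := by
        rw [Finset.sum_image]
        intro a ha b hb hab
        rw [Finset.mem_coe, Finset.mem_Icc] at ha hb
        exact hσ.injOn ⟨ha.1, le_trans ha.2 (Nat.sub_le _ _)⟩
          ⟨hb.1, le_trans hb.2 (Nat.sub_le _ _)⟩ hab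
    _ ≤ ∑ j ∈ Finset.Icc 1 m, sv j := by
        apply Finset.sum_le_sum_of_subset_of_nonneg
        · intro j hj
          obtain ⟨p, hp, rfl⟩ := Finset.mem_image.mp hj
          exact hmem p hp
        · intro j hj _
          exact (hsv j hj).1

lemma feas_point (n m k : ℕ) (hm : 1 ≤ m) (d : ℕ → ℕ → ℝ)
    (hd : ∀ j ∈ Finset.Icc 1 m, ∀ i ∈ Finset.Icc 1 n, 0 ≤ d j i) :
    memP d n m k (fun _ => 1) (fun i => bigM d n m i) (fun _ => 0) := by
  have hone : (1 : ℕ) ∈ Finset.Icc 1 m := Finset.mem_Icc.mpr ⟨le_refl _, hm⟩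
  have hd' : ∀ j ∈ Finset.Icc 1 m, ∀ i ∈ Finset.Icc 1 n, d j i ≤ bigM d n m i := by
    intro j hj i hi
    rw [Finset.mem_Icc] at hi
    refine le_trans ?_ (bigM_spec d n m i j hj)
    apply Finset.single_le_sum (f := fun p => d j p)
    · intro p hp
      rw [Finset.mem_Icc] at hp
      exact hd j hj p (Finset.mem_Icc.mpr ⟨le_trans hi.1 hp.1, hp.2⟩)
    · exact Finset.mem_Icc.mpr ⟨le_refl _, hi.2⟩
  have hM0 : ∀ i ∈ Finset.Icc 1 n, 0 ≤ bigM d n m i := by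
    intro i hi
    rw [Finset.mem_Icc] at hi
    refine le_trans ?_ (bigM_spec d n m i 1 hone)
    apply Finset.sum_nonneg
    intro p hp
    rw [Finset.mem_Icc] at hp
    exact hd 1 hone p (Finset.mem_Icc.mpr ⟨le_trans hi.1 hp.1, hp.2⟩)
  refine ⟨fun i _ => Or.inr rfl, hM0, fun j _ => Or.inl rfl, ?_, by simp, ?_⟩
  · intro t ht j hj
    rw [Finset.mem_Icc] at ht
    simp only [sub_zero, mul_one]
    unfold cumD
    apply Finset.sum_le_sum
    intro i hi
    rw [Finset.mem_Icc] at hi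
    exact hd' j hj i (Finset.mem_Icc.mpr ⟨hi.1, le_trans hi.2 ht.2⟩)
  · intro i _
    rw [mul_one]

lemma sInf_eq_of {A B : Set ℝ} (hAne : A.Nonempty) (hAbdd : BddBelow A)
    (hBbdd : BddBelow B) (hsub : A ⊆ B) (hdom : ∀ b ∈ B, ∃ a ∈ A, a ≤ b) :
    sInf A = sInf B := by
  apply le_antisymm
  · apply le_csInf (hAne.mono hsub)
    intro b hb
    obtain ⟨a, ha, hab⟩ := hdom b hb
    exact le_trans (csInf_le hAbdd ha) hab
  · exact csInf_le_csInf hBbdd hAne hsub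


/-- the optimal value of the deterministic equivalent program (with the
`m × n` inventory variables `s`) equals the optimal value of the new formulation (with the
`n` aggregated inventory variables `Θ'` and the `k+1` sorted inequalities per period). -/
theorem dep_value_eq_new_formulation_value (n m k : ℕ) (hn : 1 ≤ n) (hm : 1 ≤ m)
    (hk : k < m)
    (d : ℕ → ℕ → ℝ)
    (hd : ∀ j ∈ Finset.Icc 1 m, ∀ i ∈ Finset.Icc 1 n, 0 ≤ d j i)
    (σb : ℕ → ℕ → ℕ)
    (hσbij : ∀ i ∈ Finset.Icc 1 n, Set.BijOn (σb i) (Set.Icc 1 m) (Set.Icc 1 m))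
    (hσord : ∀ i ∈ Finset.Icc 1 n, ∀ p q, 1 ≤ p → p ≤ q → q ≤ m →
      cumD d (σb i p) i ≤ cumD d (σb i q) i)
    (f c h : ℕ → ℝ) (hh : ∀ t ∈ Finset.Icc 1 n, 0 ≤ h t) :
    sInf {v : ℝ | ∃ x y z : ℕ → ℝ, ∃ s : ℕ → ℕ → ℝ,
        memP d n m k x y z ∧
        (∀ j ∈ Finset.Icc 1 m, ∀ t ∈ Finset.Icc 1 n,
          0 ≤ s j t ∧ (∑ i ∈ Finset.Icc 1 t, y i) - cumD d j t ≤ s j t) ∧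
        v = ∑ i ∈ Finset.Icc 1 n, f i * x i + ∑ i ∈ Finset.Icc 1 n, c i * y i +
            (1 / (m : ℝ)) * ∑ j ∈ Finset.Icc 1 m, ∑ t ∈ Finset.Icc 1 n, h t * s j t} =
    sInf {v : ℝ | ∃ x y z Θ : ℕ → ℝ,
        memP d n m k x y z ∧
        (∀ i ∈ Finset.Icc 1 n, 0 ≤ Θ i ∧ ∀ q ≤ k,
          ((m : ℝ) - (q : ℝ)) * (∑ p ∈ Finset.Icc 1 i, y p) -
            ∑ p ∈ Finset.Icc 1 (m - q), cumD d (σb i p) i ≤ Θ i) ∧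
        v = ∑ i ∈ Finset.Icc 1 n, f i * x i + ∑ i ∈ Finset.Icc 1 n, c i * y i +
            (1 / (m : ℝ)) * ∑ i ∈ Finset.Icc 1 n, h i * Θ i} := by
  classical
  refine sInf_eq_of ?_ ?_ ?_ ?_ ?_
  · -- A nonempty
    refine ⟨_, fun _ => 1, fun i => bigM d n m i, fun _ => 0,
      fun j t => max 0 ((∑ i ∈ Finset.Icc 1 t, bigM d n m i) - cumD d j t),
      feas_point n m k hm d hd, ?_, rfl⟩
    intro j _ t _
    exact ⟨le_max_left _ _, le_max_right _ _⟩
  · -- A bdd below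
    refine ⟨∑ i ∈ Finset.Icc 1 n, (-(|f i|) - |c i| * max (bigM d n m i) 0), ?_⟩
    rintro v ⟨x, y, z, s, hP, hs, rfl⟩
    apply value_lb n m k d f c x y z hP
    apply Finset.sum_nonneg
    intro j hj
    apply Finset.sum_nonneg
    intro t ht
    exact mul_nonneg (hh t ht) (hs j hj t ht).1
  · -- B bdd below
    refine ⟨∑ i ∈ Finset.Icc 1 n, (-(|f i|) - |c i| * max (bigM d n m i) 0), ?_⟩
    rintro v ⟨x, y, z, Θ, hP, hΘ, rfl⟩
    apply value_lb n m k d f c x y z hP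
    apply Finset.sum_nonneg
    intro i hi
    exact mul_nonneg (hh i hi) (hΘ i hi).1
  · -- A ⊆ B
    rintro v ⟨x, y, z, s, hP, hs, rfl⟩
    refine ⟨x, y, z, fun i => ∑ j ∈ Finset.Icc 1 m, s j i, hP, ?_, ?_⟩
    · intro i hi
      refine ⟨Finset.sum_nonneg fun j hj => (hs j hj i hi).1, ?_⟩
      intro q hq
      exact agg m k q hk hq (σb i) (hσbij i hi) (fun j => cumD d j i)
        (∑ p ∈ Finset.Icc 1 i, y p) (fun j => s j i)
        (fun j hj => ⟨(hs j hj i hi).1, (hs j hj i hi).2⟩)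
    · congr 1
      congr 1
      rw [Finset.sum_comm]
      exact Finset.sum_congr rfl fun t _ => (Finset.mul_sum _ _ _).symm
  · -- domination
    rintro v ⟨x, y, z, Θ, hP, hΘ, rfl⟩
    refine ⟨_, ⟨x, y, z, fun j t => max 0 ((∑ i ∈ Finset.Icc 1 t, y i) - cumD d j t),
      hP, fun j _ t _ => ⟨le_max_left _ _, le_max_right _ _⟩, rfl⟩, ?_⟩
    have hkey : ∀ t ∈ Finset.Icc 1 n,
        ∑ j ∈ Finset.Icc 1 m, max 0 ((∑ i ∈ Finset.Icc 1 t, y i) - cumD d j t) ≤ Θ t := by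
      intro t ht
      exact core m k hk (fun j => cumD d j t) (σb t) (hσbij t ht)
        (fun p q hp hpq hq => hσord t ht p q hp hpq hq) z hP.2.2.1 hP.2.2.2.2.1
        (∑ i ∈ Finset.Icc 1 t, y i) (fun j hj => hP.2.2.2.1 t ht j hj) (Θ t)
        (fun q hq => ((hΘ t ht).2 q hq))
    have hstep : ∑ j ∈ Finset.Icc 1 m, ∑ t ∈ Finset.Icc 1 n,
          h t * max 0 ((∑ i ∈ Finset.Icc 1 t, y i) - cumD d j t)
        ≤ ∑ t ∈ Finset.Icc 1 n, h t * Θ t := by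
      rw [Finset.sum_comm]
      apply Finset.sum_le_sum
      intro t ht
      rw [← Finset.mul_sum]
      exact mul_le_mul_of_nonneg_left (hkey t ht) (hh t ht)
    have h1m : (0:ℝ) ≤ 1 / m := by positivity
    have := mul_le_mul_of_nonneg_left hstep h1m
    linarith


end
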